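/- Let Q be a rack and α a congruence. The quotient Q/α is faithful (its Cayley representation a ↦ L_a is injective) if and only if α = con_{Dis^α}. -/
import Mathlib


structure LeftQuasigroup (Q : Type*) where
  op : Q → Q → Q
  dv : Q → Q → Q
  dv_op : ∀ x y, dv x (op x y) = y
  op_dv : ∀ x y, op x (dv x y) = y

namespace LeftQuasigroup

variable {Q : Type*} (S : LeftQuasigroup Q)

/-- The left translation by `a`, as a permutation of `Q`. -/
def L (a : Q) : Equiv.Perm Q :=
  ⟨S.op a, S.dv a, S.dv_op a, S.op_dv a⟩

/-- The left multiplication group. -/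
def LMlt : Subgroup (Equiv.Perm Q) :=
  Subgroup.closure (Set.range S.L)

/-- The displacement group. -/
def Dis : Subgroup (Equiv.Perm Q) :=
  Subgroup.closure { f | ∃ a b, f = S.L a * (S.L b)⁻¹ }

/-- `α` is a congruence of the left quasigroup. -/
def IsCongruence (α : Q → Q → Prop) : Prop :=
  Equivalence α ∧
  (∀ a b c d, α a b → α c d → α (S.op a c) (S.op b d)) ∧
  (∀ a b c d, α a b → α c d → α (S.dv a c) (S.dv b d))

/-- The displacement group relative to `α`: the smallest normal subgroup of
`LMlt` containing all `L a * (L b)⁻¹` with `α a b`, given explicitly as the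
subgroup generated by the `LMlt`-conjugates of such elements. -/
def DisRel (α : Q → Q → Prop) : Subgroup (Equiv.Perm Q) :=
  Subgroup.closure
    { f | ∃ g ∈ S.LMlt, ∃ a b, α a b ∧ f = g * (S.L a * (S.L b)⁻¹) * g⁻¹ }

/-- The set `Dis^α = {h ∈ Dis(Q) : h(a) α a for all a}`. -/
def DisUpSet (α : Q → Q → Prop) : Set (Equiv.Perm Q) :=
  { h | h ∈ S.Dis ∧ ∀ a, α (h a) a }

/-- Left self-distributivity, making a left quasigroup a rack. -/
def IsRack : Prop :=
  ∀ x y z, S.op x (S.op y z) = S.op (S.op x y) (S.op x z)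

end LeftQuasigroup

open LeftQuasigroup

/-- `Q/α` is faithful if and only if `α = con_{Dis^α}`. -/
theorem stmt_14 {Q : Type*} (S : LeftQuasigroup Q) (hSD : S.IsRack)
    (α : Q → Q → Prop) (hα : S.IsCongruence α) :
    (∀ a b : Q, (∀ c, α (S.op a c) (S.op b c)) → α a b) ↔
    (∀ a b : Q, α a b ↔ S.L a * (S.L b)⁻¹ ∈ S.DisUpSet α) := by
  have happ : ∀ a b c : Q, (S.L a * (S.L b)⁻¹) c = S.op a (S.dv b c) := fun _ _ _ => rfl
  have hdis : ∀ a b : Q, S.L a * (S.L b)⁻¹ ∈ S.Dis := fun a b =>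
    Subgroup.subset_closure ⟨a, b, rfl⟩
  have hfwd : ∀ a b : Q, α a b → ∀ c, α ((S.L a * (S.L b)⁻¹) c) c := by
    intro a b hab c
    rw [happ]
    have := (hα.2.1) a b (S.dv b c) (S.dv b c) hab (hα.1.refl _)
    rwa [S.op_dv] at this
  constructor
  · intro hfa a b
    constructor
    · intro hab
      exact ⟨hdis a b, hfwd a b hab⟩
    · rintro ⟨-, h⟩
      apply hfa
      intro c
      have := h (S.op b c)
      rwa [happ, S.dv_op] at this
  · intro hiff a b h
    refine (hiff a b).2 ⟨hdis a b, fun c => ?_⟩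
    rw [happ]
    have := h (S.dv b c)
    rwa [S.op_dv] at this
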